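/- arXiv:2311.11338 — 2 statements merged into one kernel-verified Lean document; each statement's English description precedes it below -/
import Mathlib

section
/- Let F = {f_0,…,f_{N−1}} be a finite family of homeomorphisms of the circle 𝕊¹ (with metric d), μ a probability measure on I = {0,…,N−1} with weights p_0,…,p_{N−1}, and ν a μ-stationary probability measure on 𝕊¹. Suppose there exist α ∈ (0,1), λ ∈ (0,1), c > 0 such that for all x,y ∈ 𝕊¹ and all n ∈ ℕ, ∫ d(X_n^x(i), X_n^y(i))^α dμ^ℕ(i) ≤ c·λ^n. Define (Qφ)(j,x) := Σ_{i∈I} p_i φ(i, f_j(x)) and |φ|_α := sup_{j∈I, x≠y} |φ(j,x) − φ(j,y)| / d(x,y)^α. Then there exists C > 0 such that for every bounded measurable φ : I × 𝕊¹ → ℝ and every n ≥ 1: sup_{(j,y) ∈ I×𝕊¹} | (Q^n φ)(j,y) − ∫ φ d(μ⊗ν) | ≤ C·λ^n·|φ|_α. -/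
open MeasureTheory Topology Filter

noncomputable section

/-- Iteration of the IFS: `ifsIter f i n = f (i (n-1)) ∘ ⋯ ∘ f (i 0)`, i.e. `f_i^n`. -/
def ifsIter {α : Type*} {N : ℕ} (f : Fin N → α → α) (i : ℕ → Fin N) : ℕ → α → α
  | 0, x => x
  | n + 1, x => f (i n) (ifsIter f i n x)

/-- `P` is the Bernoulli product measure `μ^ℕ` on `ℕ → Fin N` with weights `p`. -/
def IsBernoulli {N : ℕ} (p : Fin N → ℝ) (P : Measure (ℕ → Fin N)) : Prop :=
  IsProbabilityMeasure P ∧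
    ∀ (n : ℕ) (w : Fin n → Fin N),
      P {i | ∀ k : Fin n, i (k : ℕ) = w k} = ∏ k : Fin n, ENNReal.ofReal (p (w k))

/-- Hypothesis (H): there is no probability measure invariant under every map of the IFS. -/
def HypH {N : ℕ} (f : Fin N → UnitAddCircle → UnitAddCircle) : Prop :=
  ¬ ∃ m : Measure UnitAddCircle, IsProbabilityMeasure m ∧
      ∀ j : Fin N, Measure.map (f j) m = m

/-- Property (P): proximality. -/
def HypP {N : ℕ} (f : Fin N → UnitAddCircle → UnitAddCircle) : Prop :=
  ∀ x y : UnitAddCircle, ∃ i : ℕ → Fin N, ∃ φ : ℕ → ℕ, StrictMono φ ∧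
    Tendsto (fun k => dist (ifsIter f i (φ k) x) (ifsIter f i (φ k) y)) atTop (𝓝 0)

/-- `ν` is a `μ`-stationary measure for the IFS with probabilities: `ν = Σ_j p_j (f_j)_* ν`. -/
def IFSStationary {N : ℕ} (p : Fin N → ℝ) (f : Fin N → UnitAddCircle → UnitAddCircle)
    (ν : Measure UnitAddCircle) : Prop :=
  ν = ∑ j : Fin N, ENNReal.ofReal (p j) • Measure.map (f j) ν

/-- Hölder continuity of `h`. -/
def IsHolderFn (h : UnitAddCircle → ℝ) : Prop :=
  ∃ H > (0 : ℝ), ∃ β ∈ Set.Ioc (0 : ℝ) 1, ∀ x y, |h x - h y| ≤ H * dist x y ^ β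

/-- `g j` is the modulus of the derivative of `f j`, expressed as a metric derivative. -/
def IsAbsDerivOf {N : ℕ} (f : Fin N → UnitAddCircle → UnitAddCircle)
    (g : Fin N → UnitAddCircle → ℝ) : Prop :=
  ∀ (j : Fin N) (x : UnitAddCircle),
    Tendsto (fun y => dist (f j x) (f j y) / dist x y) (𝓝[≠] x) (𝓝 (g j x))

/-- The Laplace–Markov operator `Q`. -/
def Qop {N : ℕ} (p : Fin N → ℝ) (f : Fin N → UnitAddCircle → UnitAddCircle)
    (φ : Fin N × UnitAddCircle → ℝ) : Fin N × UnitAddCircle → ℝ :=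
  fun z => ∑ i : Fin N, p i * φ (i, f z.1 z.2)

namespace Aux18

def appW {α : Type*} {N : ℕ} (f : Fin N → α → α) : (n : ℕ) → (Fin n → Fin N) → α → α
  | 0, _, x => x
  | n+1, w, x => appW f n (Fin.tail w) (f (w 0) x)

lemma appW_cons {α : Type*} {N : ℕ} (f : Fin N → α → α) (n : ℕ) (j : Fin N)
    (w : Fin n → Fin N) (x : α) :
    appW f (n+1) (Fin.cons j w) x = appW f n w (f j x) := by
  simp [appW, Fin.tail_cons]

lemma appW_succ_last {α : Type*} {N : ℕ} (f : Fin N → α → α) :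
    ∀ (n : ℕ) (v : Fin (n+1) → Fin N) (x : α),
      appW f (n+1) v x = f (v (Fin.last n)) (appW f n (Fin.init v) x)
  | 0, v, x => by
    simp [appW, Fin.last]
  | n+1, v, x => by
    rw [show appW f (n+2) v x = appW f (n+1) (Fin.tail v) (f (v 0) x) from rfl,
      appW_succ_last f n (Fin.tail v)]
    have h1 : Fin.tail v (Fin.last n) = v (Fin.last (n+1)) := by
      simp [Fin.tail, Fin.succ_last]
    have h2 : Fin.init (Fin.tail v) = Fin.tail (Fin.init v) :=
      (Fin.tail_init_eq_init_tail v).symm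
    have h3 : (Fin.init v) 0 = v 0 := by simp [Fin.init]
    rw [h1, h2]
    rw [show appW f (n+1) (Fin.init v) x
        = appW f n (Fin.tail (Fin.init v)) (f ((Fin.init v) 0) x) from rfl, h3]

lemma ifsIter_eq_appW {α : Type*} {N : ℕ} (f : Fin N → α → α) :
    ∀ (n : ℕ) (i : ℕ → Fin N) (x : α),
      ifsIter f i n x = appW f n (fun k : Fin n => i k) x
  | 0, i, x => rfl
  | n+1, i, x => by
    rw [show ifsIter f i (n+1) x = f (i n) (ifsIter f i n x) from rfl,
      ifsIter_eq_appW f n i x, appW_succ_last]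
    have h1 : Fin.init (fun k : Fin (n+1) => i (k : ℕ)) = fun k : Fin n => i (k : ℕ) := by
      funext k; simp [Fin.init]
    rw [h1, Fin.val_last]

lemma continuous_appW {N : ℕ} (f : Fin N → UnitAddCircle → UnitAddCircle)
    (hf : ∀ j, Continuous (f j)) :
    ∀ (n : ℕ) (w : Fin n → Fin N), Continuous (appW f n w)
  | 0, _ => continuous_id
  | n+1, w => (continuous_appW f hf n (Fin.tail w)).comp (hf (w 0))

def consEquiv' (N n : ℕ) : (Fin N × (Fin n → Fin N)) ≃ (Fin (n+1) → Fin N) where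
  toFun q := Fin.cons q.1 q.2
  invFun v := (v 0, Fin.tail v)
  left_inv q := by simp
  right_inv v := by simp [Fin.cons_self_tail]

def snocEquiv' (N n : ℕ) : ((Fin n → Fin N) × Fin N) ≃ (Fin (n+1) → Fin N) where
  toFun q := Fin.snoc q.1 q.2
  invFun v := (Fin.init v, v (Fin.last n))
  left_inv q := by simp
  right_inv v := by simp [Fin.snoc_init_self]

lemma init_cons {N n : ℕ} (i : Fin N) (v : Fin (n+1) → Fin N) :
    Fin.init (α := fun _ : Fin (n+2) => Fin N) (Fin.cons i v)
      = Fin.cons (α := fun _ : Fin (n+1) => Fin N) i (Fin.init v) := by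
  funext k
  refine Fin.cases ?_ (fun k => ?_) k
  · simp [Fin.init]
  · simp [Fin.init, Fin.castSucc_fin_succ]

/-- Integral over the Bernoulli measure of a function of the first `n` coordinates. -/
lemma int_eq_sum {N : ℕ} (p : Fin N → ℝ) (hp : ∀ j, 0 ≤ p j)
    (P : Measure (ℕ → Fin N)) (hP : IsBernoulli p P) (n : ℕ)
    (G : (Fin n → Fin N) → ℝ) :
    ∫ i, G (fun k : Fin n => i (k : ℕ)) ∂P
      = ∑ w : Fin n → Fin N, (∏ k, p (w k)) * G w := by
  have hPprob := hP.1
  set π : (ℕ → Fin N) → (Fin n → Fin N) := fun i k => i (k : ℕ) with hπ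
  have hπm : Measurable π := measurable_pi_lambda _ (fun k => measurable_pi_apply _)
  have hmap : IsProbabilityMeasure (P.map π) := Measure.isProbabilityMeasure_map hπm.aemeasurable
  have := integral_map (μ := P) hπm.aemeasurable
    (measurable_of_countable G).aestronglyMeasurable
  rw [show (fun i => G (fun k : Fin n => i (k : ℕ))) = fun i => G (π i) from rfl, ← this]
  rw [integral_fintype (Integrable.of_finite)]
  refine Finset.sum_congr rfl fun w _ => ?_
  rw [measureReal_def, Measure.map_apply hπm (measurableSet_singleton w)]
  have hpre : π ⁻¹' {w} = {i | ∀ k : Fin n, i (k : ℕ) = w k} := by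
    ext i
    simp [hπ, funext_iff]
  rw [hpre, hP.2 n w, ENNReal.toReal_prod]
  have : ∀ k : Fin n, (ENNReal.ofReal (p (w k))).toReal = p (w k) :=
    fun k => ENNReal.toReal_ofReal (hp _)
  simp only [this, smul_eq_mul]

lemma integrable_bdd {X : Type*} [MeasurableSpace X] (m : Measure X) [IsFiniteMeasure m]
    {h : X → ℝ} (hm : Measurable h) (B : ℝ) (hB : ∀ x, |h x| ≤ B) : Integrable h m :=
  ⟨hm.aestronglyMeasurable,
    HasFiniteIntegral.of_bounded (C := B) (ae_of_all _ fun x => by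
      simpa [Real.norm_eq_abs] using hB x)⟩

variable {N : ℕ} (p : Fin N → ℝ) (fc : Fin N → UnitAddCircle → UnitAddCircle)
  (ν : Measure UnitAddCircle)

lemma stat_one (hp : ∀ j, 0 ≤ p j) (hfc : ∀ j, Continuous (fc j))
    [IsProbabilityMeasure ν]
    (hsta : ν = ∑ j : Fin N, ENNReal.ofReal (p j) • Measure.map (fc j) ν)
    (h : UnitAddCircle → ℝ) (hm : Measurable h) (B : ℝ) (hB : ∀ x, |h x| ≤ B) :
    ∫ x, h x ∂ν = ∑ j, p j * ∫ x, h (fc j x) ∂ν := by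
  have hint : ∀ j : Fin N, Integrable h (Measure.map (fc j) ν) := by
    intro j
    have : IsProbabilityMeasure (Measure.map (fc j) ν) :=
      Measure.isProbabilityMeasure_map (hfc j).measurable.aemeasurable
    exact integrable_bdd _ hm B hB
  conv_lhs => rw [hsta]
  rw [integral_finset_sum_measure (fun j _ => (hint j).smul_measure ENNReal.ofReal_ne_top)]
  refine Finset.sum_congr rfl fun j _ => ?_
  rw [integral_smul_measure,
    integral_map (hfc j).measurable.aemeasurable hm.aestronglyMeasurable,
    ENNReal.toReal_ofReal (hp j), smul_eq_mul]

lemma stat_n (hp : ∀ j, 0 ≤ p j) (hfc : ∀ j, Continuous (fc j))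
    [IsProbabilityMeasure ν]
    (hsta : ν = ∑ j : Fin N, ENNReal.ofReal (p j) • Measure.map (fc j) ν)
    (h : UnitAddCircle → ℝ) (hm : Measurable h) (B : ℝ) (hB : ∀ x, |h x| ≤ B) :
    ∀ n : ℕ, ∫ x, h x ∂ν
      = ∑ w : Fin n → Fin N, (∏ k, p (w k)) * ∫ x, h (appW fc n w x) ∂ν := by
  intro n
  induction n with
  | zero =>
    rw [Fintype.sum_unique]
    simp [appW]
  | succ n ih =>
    rw [ih]
    have step : ∀ w : Fin n → Fin N,
        ∫ x, h (appW fc n w x) ∂ν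
          = ∑ j, p j * ∫ x, h (appW fc n w (fc j x)) ∂ν := by
      intro w
      exact stat_one p fc ν hp hfc hsta (fun x => h (appW fc n w x))
        (hm.comp (continuous_appW fc hfc n w).measurable) B (fun x => hB _)
    have reindex : ∑ v : Fin (n+1) → Fin N,
          (∏ k, p (v k)) * ∫ x, h (appW fc (n+1) v x) ∂ν
        = ∑ w : Fin n → Fin N, (∏ k, p (w k)) *
            (∑ j, p j * ∫ x, h (appW fc n w (fc j x)) ∂ν) := by
      rw [← Equiv.sum_comp (consEquiv' N n)
        (fun v => (∏ k, p (v k)) * ∫ x, h (appW fc (n+1) v x) ∂ν),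
        Fintype.sum_prod_type]
      simp only [consEquiv', Equiv.coe_fn_mk]
      rw [Finset.sum_comm]
      refine Finset.sum_congr rfl fun w _ => ?_
      rw [Finset.mul_sum]
      refine Finset.sum_congr rfl fun j _ => ?_
      simp only [appW_cons]
      rw [Fin.prod_univ_succ]
      simp only [Fin.cons_zero, Fin.cons_succ]
      ring
    rw [reindex]
    exact Finset.sum_congr rfl fun w _ => by rw [step w]

lemma Q_iter (φ : Fin N × UnitAddCircle → ℝ) :
    ∀ (n : ℕ) (j : Fin N) (y : UnitAddCircle),
      (Qop p fc)^[n+1] φ (j, y)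
        = ∑ v : Fin (n+1) → Fin N, (∏ k, p (v k)) *
            φ (v (Fin.last n), appW fc n (Fin.init v) (fc j y)) := by
  intro n
  induction n with
  | zero =>
    intro j y
    rw [Function.iterate_one]
    rw [← Equiv.sum_comp (Equiv.funUnique (Fin 1) (Fin N)).symm
      (fun v : Fin 1 → Fin N => (∏ k, p (v k)) *
        φ (v (Fin.last 0), appW fc 0 (Fin.init v) (fc j y)))]
    simp [Qop, appW, Equiv.funUnique]
  | succ n ih =>
    intro j y
    rw [Function.iterate_succ_apply']
    show ∑ i : Fin N, p i * (Qop p fc)^[n+1] φ (i, fc j y) = _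
    rw [← Equiv.sum_comp (consEquiv' N (n+1))
      (fun v : Fin (n+2) → Fin N => (∏ k, p (v k)) *
        φ (v (Fin.last (n+1)), appW fc (n+1) (Fin.init v) (fc j y))),
      Fintype.sum_prod_type]
    simp only [consEquiv', Equiv.coe_fn_mk]
    refine Finset.sum_congr rfl fun i _ => ?_
    rw [ih i (fc j y), Finset.mul_sum]
    refine Finset.sum_congr rfl fun v _ => ?_
    rw [init_cons, appW_cons, ← Fin.succ_last, Fin.cons_succ]
    conv_rhs => rw [Fin.prod_univ_succ]
    simp only [Fin.cons_zero, Fin.cons_succ]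
    ring

lemma exists_bound {g : UnitAddCircle → ℝ} (hg : Continuous g) : ∃ B, ∀ x, |g x| ≤ B := by
  obtain ⟨B, hB⟩ := (isCompact_range hg.abs).bddAbove
  exact ⟨B, fun x => hB (Set.mem_range_self x)⟩

end Aux18

open Aux18 in
theorem stmt18 {N : ℕ} (f : Fin N → (UnitAddCircle ≃ₜ UnitAddCircle))
    (p : Fin N → ℝ) (hp : ∀ j, 0 ≤ p j) (hpsum : ∑ j, p j = 1)
    (P : Measure (ℕ → Fin N)) (hP : IsBernoulli p P)
    (ν : Measure UnitAddCircle) (hν : IsProbabilityMeasure ν)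
    (hsta : IFSStationary p (fun j => ⇑(f j)) ν)
    (α : ℝ) (hα : α ∈ Set.Ioo (0 : ℝ) 1) (lam : ℝ) (hlam : lam ∈ Set.Ioo (0 : ℝ) 1)
    (c : ℝ) (hc : 0 < c)
    (hdecay : ∀ (n : ℕ) (x y : UnitAddCircle),
      (∫ i, (dist (ifsIter (fun j => ⇑(f j)) i n x)
          (ifsIter (fun j => ⇑(f j)) i n y)) ^ α ∂P) ≤ c * lam ^ n) :
    ∃ C > (0 : ℝ), ∀ φ : Fin N × UnitAddCircle → ℝ, Measurable φ →
      (∃ Cb : ℝ, ∀ z, |φ z| ≤ Cb) →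
      ∀ K : ℝ, (∀ (j : Fin N) (x y : UnitAddCircle),
          |φ (j, x) - φ (j, y)| ≤ K * dist x y ^ α) →
        ∀ (n : ℕ) (j : Fin N) (y : UnitAddCircle),
          |(Qop p (fun j => ⇑(f j)))^[n + 1] φ (j, y) -
              ∑ j' : Fin N, p j' * ∫ x, φ (j', x) ∂ν|
            ≤ C * lam ^ (n + 1) * K := by
  haveI := hν
  haveI := hP.1
  rcases Nat.eq_zero_or_pos N with hN0 | hNpos
  · subst hN0; simp at hpsum
  set fc : Fin N → UnitAddCircle → UnitAddCircle := fun j => ⇑(f j) with hfcdef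
  have hfc : ∀ j, Continuous (fc j) := fun j => (f j).continuous
  have hsta' : ν = ∑ j : Fin N, ENNReal.ofReal (p j) • Measure.map (fc j) ν := hsta
  refine ⟨c / lam, div_pos hc hlam.1, ?_⟩
  rintro φ hφm ⟨Cb, hCb⟩ K hK n j y
  -- K is nonnegative
  have hKnn : 0 ≤ K := by
    have hne : ((1/2 : ℝ) : UnitAddCircle) ≠ (0 : UnitAddCircle) := by
      intro h
      rw [AddCircle.coe_eq_zero_iff] at h
      obtain ⟨m, hm⟩ := h
      have hm' : (m : ℝ) = 1/2 := by simpa using hm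
      rcases le_or_gt m 0 with h | h
      · have : (m:ℝ) ≤ 0 := by exact_mod_cast h
        linarith
      · have : (1:ℝ) ≤ (m:ℝ) := by exact_mod_cast h
        linarith
    have hd : (0:ℝ) < dist ((1/2 : ℝ) : UnitAddCircle) (0 : UnitAddCircle) := dist_pos.2 hne
    have h1 := hK ⟨0, hNpos⟩ ((1/2 : ℝ) : UnitAddCircle) 0
    nlinarith [abs_nonneg (φ (⟨0, hNpos⟩, ((1/2 : ℝ) : UnitAddCircle))
      - φ (⟨0, hNpos⟩, (0:UnitAddCircle))), Real.rpow_pos_of_pos hd α]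
  have coeff_nonneg : ∀ (w : Fin n → Fin N) (j' : Fin N), 0 ≤ (∏ k, p (w k)) * p j' :=
    fun w j' => mul_nonneg (Finset.prod_nonneg fun _ _ => hp _) (hp _)
  have hmeasφ : ∀ (j' : Fin N) (w : Fin n → Fin N),
      Measurable fun x => φ (j', appW fc n w x) :=
    fun j' w => hφm.comp (measurable_const.prodMk (continuous_appW fc hfc n w).measurable)
  have hintφ : ∀ (j' : Fin N) (w : Fin n → Fin N),
      Integrable (fun x => φ (j', appW fc n w x)) ν :=
    fun j' w => integrable_bdd ν (hmeasφ j' w) Cb (fun x => hCb _)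
  have hintD : ∀ w : Fin n → Fin N,
      Integrable (fun x => dist (appW fc n w (fc j y)) (appW fc n w x) ^ α) ν := by
    intro w
    have hcont : Continuous fun x => dist (appW fc n w (fc j y)) (appW fc n w x) ^ α :=
      (continuous_const.dist (continuous_appW fc hfc n w)).rpow_const (fun x => Or.inr hα.1.le)
    obtain ⟨B, hB⟩ := exists_bound hcont
    exact integrable_bdd ν hcont.measurable B hB
  set D : (Fin n → Fin N) → ℝ :=
    fun w => ∫ x, dist (appW fc n w (fc j y)) (appW fc n w x) ^ α ∂ν with hDdef
  -- unroll Q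
  have hQ : (Qop p fc)^[n+1] φ (j, y)
      = ∑ w : Fin n → Fin N, ∑ j' : Fin N,
          ((∏ k, p (w k)) * p j') * φ (j', appW fc n w (fc j y)) := by
    rw [Q_iter p fc φ n j y,
      ← Equiv.sum_comp (snocEquiv' N n)
        (fun v => (∏ k, p (v k)) * φ (v (Fin.last n), appW fc n (Fin.init v) (fc j y))),
      Fintype.sum_prod_type]
    simp only [snocEquiv', Equiv.coe_fn_mk, Fin.snoc_last, Fin.init_snoc]
    refine Finset.sum_congr rfl fun w _ => Finset.sum_congr rfl fun j' _ => ?_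
    conv_lhs => rw [Fin.prod_univ_castSucc]
    simp only [Fin.snoc_castSucc, Fin.snoc_last]
  -- unroll the stationary integral
  have hA : ∑ j' : Fin N, p j' * ∫ x, φ (j', x) ∂ν
      = ∑ w : Fin n → Fin N, ∑ j' : Fin N,
          ((∏ k, p (w k)) * p j') * ∫ x, φ (j', appW fc n w x) ∂ν := by
    have hstat : ∀ j' : Fin N, ∫ x, φ (j', x) ∂ν
        = ∑ w : Fin n → Fin N, (∏ k, p (w k)) * ∫ x, φ (j', appW fc n w x) ∂ν :=
      fun j' => stat_n p fc ν hp hfc hsta' (fun x => φ (j', x))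
        (hφm.comp (measurable_const.prodMk measurable_id)) Cb (fun x => hCb _) n
    calc ∑ j' : Fin N, p j' * ∫ x, φ (j', x) ∂ν
        = ∑ j' : Fin N, ∑ w : Fin n → Fin N,
            ((∏ k, p (w k)) * p j') * ∫ x, φ (j', appW fc n w x) ∂ν := by
          refine Finset.sum_congr rfl fun j' _ => ?_
          rw [hstat j', Finset.mul_sum]
          exact Finset.sum_congr rfl fun w _ => by ring
      _ = _ := Finset.sum_comm
  rw [hQ, hA]
  have step1 : |∑ w : Fin n → Fin N, ∑ j' : Fin N,
          ((∏ k, p (w k)) * p j') * φ (j', appW fc n w (fc j y))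
      - ∑ w : Fin n → Fin N, ∑ j' : Fin N,
          ((∏ k, p (w k)) * p j') * ∫ x, φ (j', appW fc n w x) ∂ν|
      ≤ ∑ w : Fin n → Fin N, ∑ j' : Fin N, ((∏ k, p (w k)) * p j') *
          |φ (j', appW fc n w (fc j y)) - ∫ x, φ (j', appW fc n w x) ∂ν| := by
    rw [← Finset.sum_sub_distrib]
    refine (Finset.abs_sum_le_sum_abs _ _).trans ?_
    refine Finset.sum_le_sum fun w _ => ?_
    rw [← Finset.sum_sub_distrib]
    refine (Finset.abs_sum_le_sum_abs _ _).trans ?_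
    refine Finset.sum_le_sum fun j' _ => ?_
    rw [← mul_sub, abs_mul, abs_of_nonneg (coeff_nonneg w j')]
  have step2 : ∀ (w : Fin n → Fin N) (j' : Fin N),
      |φ (j', appW fc n w (fc j y)) - ∫ x, φ (j', appW fc n w x) ∂ν| ≤ K * D w := by
    intro w j'
    have hconst : φ (j', appW fc n w (fc j y))
        = ∫ _x, φ (j', appW fc n w (fc j y)) ∂ν := by
      simp
    rw [hconst, ← integral_sub (integrable_const _) (hintφ j' w)]
    have h1 : |∫ x, (φ (j', appW fc n w (fc j y)) - φ (j', appW fc n w x)) ∂ν|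
        ≤ ∫ x, |φ (j', appW fc n w (fc j y)) - φ (j', appW fc n w x)| ∂ν := by
      simpa [Real.norm_eq_abs] using norm_integral_le_integral_norm (μ := ν)
        (fun x => φ (j', appW fc n w (fc j y)) - φ (j', appW fc n w x))
    refine h1.trans ?_
    rw [hDdef, show K * ∫ x, dist (appW fc n w (fc j y)) (appW fc n w x) ^ α ∂ν
          = ∫ x, K * dist (appW fc n w (fc j y)) (appW fc n w x) ^ α ∂ν
        from (integral_const_mul K _).symm]
    refine integral_mono (((integrable_const _).sub (hintφ j' w)).abs)
      ((hintD w).const_mul K) ?_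
    intro x
    exact hK j' _ _
  have step3 : ∑ w : Fin n → Fin N, ∑ j' : Fin N, ((∏ k, p (w k)) * p j') * (K * D w)
      = K * ∑ w : Fin n → Fin N, (∏ k, p (w k)) * D w := by
    rw [Finset.mul_sum]
    refine Finset.sum_congr rfl fun w _ => ?_
    rw [← Finset.sum_mul, ← Finset.mul_sum, hpsum, mul_one]
    ring
  have step4 : ∑ w : Fin n → Fin N, (∏ k, p (w k)) * D w ≤ c * lam ^ n := by
    have swap : ∑ w : Fin n → Fin N, (∏ k, p (w k)) * D w
        = ∫ x, (∑ w : Fin n → Fin N,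
            (∏ k, p (w k)) * dist (appW fc n w (fc j y)) (appW fc n w x) ^ α) ∂ν := by
      rw [integral_finset_sum _ (fun w _ => (hintD w).const_mul _)]
      exact Finset.sum_congr rfl fun w _ => (integral_const_mul _ _).symm
    rw [swap]
    have hpt : ∀ x : UnitAddCircle, (∑ w : Fin n → Fin N,
        (∏ k, p (w k)) * dist (appW fc n w (fc j y)) (appW fc n w x) ^ α) ≤ c * lam ^ n := by
      intro x
      have h0 := hdecay n (fc j y) x
      have heq : (fun i : ℕ → Fin N =>
            dist (ifsIter fc i n (fc j y)) (ifsIter fc i n x) ^ α)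
          = fun i => (fun w : Fin n → Fin N =>
              dist (appW fc n w (fc j y)) (appW fc n w x) ^ α) (fun k : Fin n => i k) := by
        funext i
        rw [ifsIter_eq_appW, ifsIter_eq_appW]
      have hsum := int_eq_sum p hp P hP n
        (fun w : Fin n → Fin N => dist (appW fc n w (fc j y)) (appW fc n w x) ^ α)
      calc ∑ w : Fin n → Fin N,
            (∏ k, p (w k)) * dist (appW fc n w (fc j y)) (appW fc n w x) ^ α
          = ∫ i, dist (ifsIter fc i n (fc j y)) (ifsIter fc i n x) ^ α ∂P := by
            rw [← hsum]
            congr 1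
            funext i
            simp only [ifsIter_eq_appW]
        _ ≤ c * lam ^ n := h0
    calc ∫ x, (∑ w : Fin n → Fin N,
            (∏ k, p (w k)) * dist (appW fc n w (fc j y)) (appW fc n w x) ^ α) ∂ν
        ≤ ∫ _x, c * lam ^ n ∂ν :=
          integral_mono (integrable_finset_sum _ fun w _ => (hintD w).const_mul _)
            (integrable_const _) hpt
      _ = c * lam ^ n := by simp
  have final : |∑ w : Fin n → Fin N, ∑ j' : Fin N,
          ((∏ k, p (w k)) * p j') * φ (j', appW fc n w (fc j y))
      - ∑ w : Fin n → Fin N, ∑ j' : Fin N,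
          ((∏ k, p (w k)) * p j') * ∫ x, φ (j', appW fc n w x) ∂ν|
      ≤ K * (c * lam ^ n) := by
    refine step1.trans ?_
    have h2 : ∑ w : Fin n → Fin N, ∑ j' : Fin N, ((∏ k, p (w k)) * p j') *
          |φ (j', appW fc n w (fc j y)) - ∫ x, φ (j', appW fc n w x) ∂ν|
        ≤ ∑ w : Fin n → Fin N, ∑ j' : Fin N, ((∏ k, p (w k)) * p j') * (K * D w) :=
      Finset.sum_le_sum fun w _ => Finset.sum_le_sum fun j' _ =>
        mul_le_mul_of_nonneg_left (step2 w j') (coeff_nonneg w j')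
    refine h2.trans ?_
    rw [step3]
    exact mul_le_mul_of_nonneg_left step4 hKnn
  refine final.trans (le_of_eq ?_)
  have hlam0 : lam ≠ 0 := ne_of_gt hlam.1
  field_simp
  ring
end
end

section
/- Let F = {f_0,…,f_{N−1}} be a finite family of C¹-diffeomorphisms of the circle 𝕊¹ and μ a non-degenerate probability measure on I = {0,…,N−1}. Let x,y ∈ 𝕊¹ with x ≠ y, and let i ∈ I^ℕ be such that one of the two closed arcs I_i with endpoints x and y satisfies |f_i^n(I_i)| → 0 as n → ∞ (where |·| denotes arc length). Then lim_{n→∞} (1/n) log max_{z,w ∈ I_i} | (f_i^n)'(z) / (f_i^n)'(w) | = 0. Moreover, if the set Ω^{x,y} of sequences i with this property has full μ^ℕ-measure, then lim_{n→∞} (1/n) ∫ log max_{z,w ∈ I_i} | (f_i^n)'(z) / (f_i^n)'(w) | dμ^ℕ(i) = 0. -/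
open MeasureTheory Topology Filter

noncomputable section

/-- `S` is the closed (positively oriented) arc from `x` to `y` in the circle. -/
def IsClosedArc (x y : UnitAddCircle) (S : Set UnitAddCircle) : Prop :=
  ∃ a b : ℝ, a < b ∧ b - a < 1 ∧ ((a : UnitAddCircle) = x) ∧ ((b : UnitAddCircle) = y) ∧
    S = (fun t : ℝ => (t : UnitAddCircle)) '' Set.Icc a b

/-- `|(f_i^n)'(z)|`, computed via the chain rule from the moduli `g j` of the
derivatives of the maps `f j`. -/
def pderiv {N : ℕ} (f : Fin N → UnitAddCircle → UnitAddCircle)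
    (g : Fin N → UnitAddCircle → ℝ) (i : ℕ → Fin N) (n : ℕ) (z : UnitAddCircle) : ℝ :=
  ∏ k ∈ Finset.range n, g (i k) (ifsIter f i k z)

/-- `max_{z,w ∈ S} |(f_i^n)'(z) / (f_i^n)'(w)|`. -/
def maxRatio {N : ℕ} (f : Fin N → UnitAddCircle → UnitAddCircle)
    (g : Fin N → UnitAddCircle → ℝ) (i : ℕ → Fin N) (n : ℕ) (S : Set UnitAddCircle) : ℝ :=
  sSup ((fun zw : UnitAddCircle × UnitAddCircle =>
    |pderiv f g i n zw.1 / pderiv f g i n zw.2|) '' (S ×ˢ S))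

section Aux

local instance Stmt19.factZeroLtOne : Fact ((0:ℝ) < 1) := ⟨one_pos⟩

open Set

lemma Stmt19.dist_coe_le (s t : ℝ) :
    dist (s : UnitAddCircle) (t : UnitAddCircle) ≤ |s - t| := by
  rw [dist_eq_norm, ← QuotientAddGroup.mk_sub]
  simpa [Real.norm_eq_abs] using QuotientAddGroup.norm_mk_le_norm (S := AddSubgroup.zmultiples (1:ℝ)) (m := s - t)

lemma Stmt19.dist_le_volume {K : Set UnitAddCircle} (hK : IsCompact K)
    (hc : IsPreconnected K) (hne : K ≠ univ) {a b : UnitAddCircle} (ha : a ∈ K) (hb : b ∈ K) :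
    dist a b ≤ (volume K).toReal := by
  obtain ⟨q, hq⟩ : ∃ q, q ∉ K := by
    by_contra h
    push_neg at h
    exact hne (eq_univ_of_forall h)
  obtain ⟨θ, rfl⟩ := QuotientAddGroup.mk_surjective q
  set e := AddCircle.equivIoc 1 θ with he
  set φ : UnitAddCircle → ℝ := fun z => (e z : ℝ) with hφ
  have hcoe : ∀ z : UnitAddCircle, ((φ z : ℝ) : UnitAddCircle) = z := fun z =>
    (AddCircle.equivIoc 1 θ).symm_apply_apply z
  have hφcont : ContinuousOn φ K := by
    intro z hz
    have hzθ : z ≠ (θ : UnitAddCircle) := fun h => hq (h ▸ hz)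
    exact (continuous_subtype_val.continuousAt.comp
      (AddCircle.continuousAt_equivIoc 1 θ hzθ)).continuousWithinAt
  have hKcomp : IsCompact (φ '' K) := hK.image_of_continuousOn hφcont
  have hKconn : IsConnected (φ '' K) := ⟨⟨φ a, mem_image_of_mem φ ha⟩, hc.image φ hφcont⟩
  have hset : φ '' K = (fun t : ℝ => (t : UnitAddCircle)) ⁻¹' K ∩ Ioc θ (θ + 1) := by
    ext t
    constructor
    · rintro ⟨z, hz, rfl⟩
      refine ⟨?_, (e z).2⟩
      show ((φ z : ℝ) : UnitAddCircle) ∈ K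
      rw [hcoe z]; exact hz
    · rintro ⟨ht, ht'⟩
      refine ⟨(t : UnitAddCircle), ht, ?_⟩
      show ((e ((t : ℝ) : UnitAddCircle) : ℝ)) = t
      have : e ((t : ℝ) : UnitAddCircle) = ⟨t, ht'⟩ := by
        rw [Equiv.apply_eq_iff_eq_symm_apply]
        rfl
      rw [this]
  have hvol : volume K = volume (φ '' K) := by
    rw [hset]
    exact AddCircle.add_projection_respects_measure (T := 1) θ hK.isClosed.measurableSet
  set u := sInf (φ '' K) with hu
  set v := sSup (φ '' K) with hv
  have hIcc : φ '' K = Icc u v := eq_Icc_of_connected_compact hKconn hKcomp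
  have hmem_a : φ a ∈ Icc u v := hIcc ▸ mem_image_of_mem φ ha
  have hmem_b : φ b ∈ Icc u v := hIcc ▸ mem_image_of_mem φ hb
  simp only [mem_Icc] at hmem_a hmem_b
  have hd : dist a b ≤ |φ a - φ b| := by
    calc dist a b = dist ((φ a : ℝ) : UnitAddCircle) ((φ b : ℝ) : UnitAddCircle) := by
          rw [hcoe a, hcoe b]
      _ ≤ |φ a - φ b| := Stmt19.dist_coe_le _ _
  have hab : |φ a - φ b| ≤ v - u := by
    rw [abs_sub_le_iff]; constructor <;> linarith
  have hvol2 : (volume K).toReal = v - u := by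
    rw [hvol, hIcc, Real.volume_Icc, ENNReal.toReal_ofReal (by linarith)]
  linarith [hd.trans hab]

lemma Stmt19.ratio_le {N : ℕ} (f : Fin N → UnitAddCircle → UnitAddCircle)
    (g : Fin N → UnitAddCircle → ℝ) (hgpos : ∀ j x, 0 < g j x)
    (i : ℕ → Fin N) (n : ℕ) (S : Set UnitAddCircle) (c : ℕ → ℝ)
    (hc : ∀ k < n, ∀ z ∈ S, ∀ w ∈ S,
      Real.log (g (i k) (ifsIter f i k z)) - Real.log (g (i k) (ifsIter f i k w)) ≤ c k) :
    ∀ t ∈ ((fun zw : UnitAddCircle × UnitAddCircle =>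
      |pderiv f g i n zw.1 / pderiv f g i n zw.2|) '' (S ×ˢ S)),
      t ≤ Real.exp (∑ k ∈ Finset.range n, c k) := by
  rintro t ⟨⟨z, w⟩, ⟨hz, hw⟩, rfl⟩
  have hDz : 0 < pderiv f g i n z := Finset.prod_pos fun k _ => hgpos _ _
  have hDw : 0 < pderiv f g i n w := Finset.prod_pos fun k _ => hgpos _ _
  simp only
  rw [abs_of_pos (div_pos hDz hDw)]
  have hlog : Real.log (pderiv f g i n z / pderiv f g i n w) =
      ∑ k ∈ Finset.range n, (Real.log (g (i k) (ifsIter f i k z))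
        - Real.log (g (i k) (ifsIter f i k w))) := by
    rw [Real.log_div hDz.ne' hDw.ne']
    unfold pderiv
    rw [Real.log_prod fun k _ => (hgpos _ _).ne',
      Real.log_prod fun k _ => (hgpos _ _).ne', Finset.sum_sub_distrib]
  calc pderiv f g i n z / pderiv f g i n w
      = Real.exp (Real.log (pderiv f g i n z / pderiv f g i n w)) :=
        (Real.exp_log (div_pos hDz hDw)).symm
    _ ≤ Real.exp (∑ k ∈ Finset.range n, c k) := by
        rw [hlog]
        exact Real.exp_le_exp.2 (Finset.sum_le_sum fun k hk =>
          hc k (Finset.mem_range.1 hk) z hz w hw)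

lemma Stmt19.maxRatio_bounds {N : ℕ} (f : Fin N → UnitAddCircle → UnitAddCircle)
    (g : Fin N → UnitAddCircle → ℝ) (hgpos : ∀ j x, 0 < g j x)
    (i : ℕ → Fin N) (n : ℕ) (S : Set UnitAddCircle) (hSne : S.Nonempty) (c : ℕ → ℝ)
    (hc : ∀ k < n, ∀ z ∈ S, ∀ w ∈ S,
      Real.log (g (i k) (ifsIter f i k z)) - Real.log (g (i k) (ifsIter f i k w)) ≤ c k) :
    1 ≤ maxRatio f g i n S ∧
      Real.log (maxRatio f g i n S) ≤ ∑ k ∈ Finset.range n, c k := by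
  obtain ⟨z, hz⟩ := hSne
  have hDz : 0 < pderiv f g i n z := Finset.prod_pos fun k _ => hgpos _ _
  have h1 : (1 : ℝ) ∈ ((fun zw : UnitAddCircle × UnitAddCircle =>
      |pderiv f g i n zw.1 / pderiv f g i n zw.2|) '' (S ×ˢ S)) := by
    refine ⟨(z, z), ⟨hz, hz⟩, ?_⟩
    simp [div_self hDz.ne']
  have hbdd : BddAbove ((fun zw : UnitAddCircle × UnitAddCircle =>
      |pderiv f g i n zw.1 / pderiv f g i n zw.2|) '' (S ×ˢ S)) :=
    ⟨Real.exp (∑ k ∈ Finset.range n, c k), fun t ht => Stmt19.ratio_le f g hgpos i n S c hc t ht⟩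
  have hge : 1 ≤ maxRatio f g i n S := le_csSup hbdd h1
  refine ⟨hge, ?_⟩
  rw [Real.log_le_iff_le_exp (lt_of_lt_of_le one_pos hge)]
  exact csSup_le ⟨1, h1⟩ (Stmt19.ratio_le f g hgpos i n S c hc)

lemma Stmt19.tendsto_of_le_add {u : ℕ → ℝ} (h0 : ∀ n, 0 ≤ u n)
    (h : ∀ ε > (0:ℝ), ∃ C : ℝ, ∀ᶠ n in atTop, u n ≤ C / n + ε) :
    Tendsto u atTop (𝓝 0) := by
  rw [Metric.tendsto_atTop]
  intro ε hε
  obtain ⟨C, hC⟩ := h (ε/2) (half_pos hε)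
  have h2 : Tendsto (fun n : ℕ => C / n + ε/2) atTop (𝓝 (0 + ε/2)) :=
    (tendsto_const_div_atTop_nhds_zero_nat C).add tendsto_const_nhds
  rw [zero_add] at h2
  have h3 : ∀ᶠ n : ℕ in atTop, C / (n:ℝ) + ε/2 < ε :=
    Filter.Tendsto.eventually_lt_const (by linarith : ε/2 < ε) h2
  obtain ⟨M, hM⟩ := eventually_atTop.1 (hC.and h3)
  refine ⟨M, fun n hn => ?_⟩
  obtain ⟨h4, h5⟩ := hM n hn
  rw [Real.dist_eq, sub_zero, abs_of_nonneg (h0 n)]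
  linarith

end Aux

theorem stmt19 {N : ℕ} (f : Fin N → (UnitAddCircle ≃ₜ UnitAddCircle))
    (g : Fin N → UnitAddCircle → ℝ)
    (hgc : ∀ j, Continuous (g j))
    (hgpos : ∀ j x, 0 < g j x)
    (hgd : IsAbsDerivOf (fun j => ⇑(f j)) g)
    (p : Fin N → ℝ) (hp : ∀ j, 0 < p j) (hpsum : ∑ j, p j = 1)
    (P : Measure (ℕ → Fin N)) (hP : IsBernoulli p P)
    (x y : UnitAddCircle) (hxy : x ≠ y) :
    (∀ (i : ℕ → Fin N) (S : Set UnitAddCircle),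
      (IsClosedArc x y S ∨ IsClosedArc y x S) →
      Tendsto (fun n : ℕ => (volume (ifsIter (fun j => ⇑(f j)) i n '' S)).toReal)
        atTop (𝓝 0) →
      Tendsto (fun n : ℕ => (1 / (n : ℝ)) *
          Real.log (maxRatio (fun j => ⇑(f j)) g i n S)) atTop (𝓝 0)) ∧
    (∀ Ich : (ℕ → Fin N) → Set UnitAddCircle,
      (∀ᵐ i ∂P, (IsClosedArc x y (Ich i) ∨ IsClosedArc y x (Ich i)) ∧
        Tendsto (fun n : ℕ => (volume (ifsIter (fun j => ⇑(f j)) i n '' (Ich i))).toReal)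
          atTop (𝓝 0)) →
      Tendsto (fun n : ℕ => (1 / (n : ℝ)) *
          ∫ i, Real.log (maxRatio (fun j => ⇑(f j)) g i n (Ich i)) ∂P) atTop (𝓝 0)) := by
  classical
  have fact1 : Fact ((0:ℝ) < 1) := ⟨one_pos⟩
  haveI := fact1
  haveI hPprob : IsProbabilityMeasure P := hP.1
  -- Fin N is nonempty
  haveI hNne : Nonempty (Fin N) := by
    rcases Nat.eq_zero_or_pos N with h | h
    · subst h
      haveI : IsEmpty (ℕ → Fin 0) := ⟨fun i => (i 0).elim0⟩
      have h1 : P Set.univ = 1 := measure_univ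
      rw [Set.univ_eq_empty_iff.2 ‹IsEmpty (ℕ → Fin 0)›, measure_empty] at h1
      exact absurd h1 (by simp)
    · exact ⟨⟨0, h⟩⟩
  set ff : Fin N → UnitAddCircle → UnitAddCircle := fun j => ⇑(f j) with hff
  -- a uniform bound on |log (g j z)|
  have hbd : ∀ j : Fin N, ∃ Cj : ℝ, ∀ z, |Real.log (g j z)| ≤ Cj := by
    intro j
    obtain ⟨Cj, hCj⟩ := isCompact_univ.exists_bound_of_continuousOn
      (((hgc j).log fun z => (hgpos j z).ne').continuousOn
        (s := Set.univ))
    exact ⟨Cj, fun z => by simpa [Real.norm_eq_abs] using hCj z (Set.mem_univ z)⟩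
  choose C hC using hbd
  set B := Finset.univ.sup' Finset.univ_nonempty C with hB
  have hBbd : ∀ (j : Fin N) (z : UnitAddCircle), |Real.log (g j z)| ≤ B :=
    fun j z => (hC j z).trans (Finset.le_sup' C (Finset.mem_univ j))
  have hB0 : 0 ≤ B :=
    le_trans (abs_nonneg _) (hBbd (Classical.arbitrary _) 0)
  -- logs differences are bounded by 2B
  have h2B : ∀ (i : ℕ → Fin N) (n : ℕ) (k : ℕ), k < n → ∀ (z w : UnitAddCircle),
      Real.log (g (i k) (ifsIter ff i k z)) - Real.log (g (i k) (ifsIter ff i k w))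
        ≤ 2 * B := by
    intro i n k _ z w
    have h1 := hBbd (i k) (ifsIter ff i k z)
    have h2 := hBbd (i k) (ifsIter ff i k w)
    rw [abs_le] at h1 h2
    linarith [h1.1, h1.2, h2.1, h2.2]
  -- arcs are nonempty, compact, preconnected
  have harc : ∀ S : Set UnitAddCircle, (IsClosedArc x y S ∨ IsClosedArc y x S) →
      S.Nonempty ∧ IsCompact S ∧ IsPreconnected S := by
    intro S hS
    have hcont_coe : Continuous (fun t : ℝ => (t : UnitAddCircle)) :=
      AddCircle.continuous_mk' 1
    obtain ⟨a, b, hab, hSeq⟩ : ∃ a b : ℝ, a < b ∧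
        S = (fun t : ℝ => (t : UnitAddCircle)) '' Set.Icc a b := by
      rcases hS with ⟨a, b, h1, _, _, _, h5⟩ | ⟨a, b, h1, _, _, _, h5⟩ <;> exact ⟨a, b, h1, h5⟩
    subst hSeq
    exact ⟨⟨(a : UnitAddCircle), ⟨a, ⟨le_refl a, hab.le⟩, rfl⟩⟩,
      isCompact_Icc.image hcont_coe,
      (isPreconnected_Icc).image _ hcont_coe.continuousOn⟩
  -- continuity of iterates
  have hFcont : ∀ (i : ℕ → Fin N) (n : ℕ), Continuous (ifsIter ff i n) := by
    intro i n
    induction n with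
    | zero => exact continuous_id
    | succ n ih => exact (f (i n)).continuous.comp ih
  -- uniform continuity of log ∘ g j, with a uniform δ
  have hUC : ∀ ε > (0:ℝ), ∃ δ > (0:ℝ), ∀ (j : Fin N) (a b : UnitAddCircle),
      dist a b < δ → |Real.log (g j a) - Real.log (g j b)| < ε := by
    intro ε hε
    have huc : ∀ j : Fin N, ∃ δ > (0:ℝ), ∀ a b : UnitAddCircle,
        dist a b < δ → |Real.log (g j a) - Real.log (g j b)| < ε := by
      intro j
      have := CompactSpace.uniformContinuous_of_continuous
        ((hgc j).log fun z => (hgpos j z).ne')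
      obtain ⟨δ, hδ0, hδ⟩ := Metric.uniformContinuous_iff.1 this ε hε
      exact ⟨δ, hδ0, fun a b hab => by
        have := hδ hab
        rwa [Real.dist_eq] at this⟩
    choose δf hδf0 hδf using huc
    refine ⟨Finset.univ.inf' Finset.univ_nonempty δf, ?_, ?_⟩
    · exact (Finset.lt_inf'_iff _).2 fun j _ => hδf0 j
    · intro j a b hab
      exact hδf j a b (lt_of_lt_of_le hab (Finset.inf'_le _ (Finset.mem_univ j)))
  -- Part 1
  have part1 : ∀ (i : ℕ → Fin N) (S : Set UnitAddCircle),
      (IsClosedArc x y S ∨ IsClosedArc y x S) →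
      Tendsto (fun n : ℕ => (volume (ifsIter ff i n '' S)).toReal) atTop (𝓝 0) →
      Tendsto (fun n : ℕ => (1 / (n : ℝ)) *
          Real.log (maxRatio ff g i n S)) atTop (𝓝 0) := by
    intro i S hS hvol
    obtain ⟨hSne, hScomp, hSconn⟩ := harc S hS
    have hlog_nonneg : ∀ n, 0 ≤ Real.log (maxRatio ff g i n S) := by
      intro n
      exact Real.log_nonneg (Stmt19.maxRatio_bounds ff g hgpos i n S hSne
        (fun _ => 2 * B) (fun k hk z hz w hw => h2B i n k hk z w)).1
    apply Stmt19.tendsto_of_le_add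
    · intro n
      exact mul_nonneg (by positivity) (hlog_nonneg n)
    · intro ε hε
      obtain ⟨δ, hδ0, hδ⟩ := hUC ε hε
      obtain ⟨n₀, hn₀⟩ := Metric.tendsto_atTop.1 hvol (min δ 1) (lt_min hδ0 one_pos)
      -- for k ≥ n₀, images are δ-small
      have hsmall : ∀ k ≥ n₀, ∀ z ∈ S, ∀ w ∈ S,
          dist (ifsIter ff i k z) (ifsIter ff i k w) < δ := by
        intro k hk z hz w hw
        have hvk := hn₀ k hk
        rw [Real.dist_eq, sub_zero, abs_of_nonneg ENNReal.toReal_nonneg] at hvk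
        have hKne : ifsIter ff i k '' S ≠ Set.univ := by
          intro h
          rw [h] at hvk
          have : volume (Set.univ : Set UnitAddCircle) = 1 := UnitAddCircle.measure_univ
          rw [this] at hvk
          simp at hvk
        have hdle := Stmt19.dist_le_volume (hScomp.image (hFcont i k))
          (hSconn.image _ (hFcont i k).continuousOn) hKne
          (Set.mem_image_of_mem _ hz) (Set.mem_image_of_mem _ hw)
        calc dist (ifsIter ff i k z) (ifsIter ff i k w)
            ≤ (volume (ifsIter ff i k '' S)).toReal := hdle
          _ < min δ 1 := hvk
          _ ≤ δ := min_le_left _ _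
      set c : ℕ → ℝ := fun k => if k < n₀ then 2 * B else ε with hc
      have hcprop : ∀ n, ∀ k < n, ∀ z ∈ S, ∀ w ∈ S,
          Real.log (g (i k) (ifsIter ff i k z)) - Real.log (g (i k) (ifsIter ff i k w))
            ≤ c k := by
        intro n k hk z hz w hw
        by_cases hk0 : k < n₀
        · simpa [hc, hk0] using h2B i n k hk z w
        · have hge := hsmall k (le_of_not_gt hk0) z hz w hw
          have := hδ (i k) _ _ hge
          simp only [hc, hk0, if_false]
          calc Real.log (g (i k) (ifsIter ff i k z))
                - Real.log (g (i k) (ifsIter ff i k w))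
              ≤ |Real.log (g (i k) (ifsIter ff i k z))
                - Real.log (g (i k) (ifsIter ff i k w))| := le_abs_self _
            _ ≤ ε := this.le
      have hsum : ∀ n, ∑ k ∈ Finset.range n, c k ≤ 2 * B * n₀ + n * ε := by
        intro n
        have h1 : ∑ k ∈ Finset.range n, c k
            ≤ ∑ k ∈ Finset.range n, (ε + if k ∈ Finset.range n₀ then 2 * B else 0) := by
          apply Finset.sum_le_sum
          intro k _
          simp only [hc, Finset.mem_range]
          by_cases hk : k < n₀ <;> simp [hk] <;> linarith
        rw [Finset.sum_add_distrib, Finset.sum_const, Finset.sum_ite_mem] at h1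
        have h2 : ∑ _k ∈ Finset.range n ∩ Finset.range n₀, 2 * B ≤ 2 * B * n₀ := by
          rw [Finset.sum_const, nsmul_eq_mul]
          have hcard : ((Finset.range n ∩ Finset.range n₀).card : ℝ) ≤ (n₀ : ℝ) := by
            have := Finset.card_le_card (Finset.inter_subset_right
              (s₁ := Finset.range n) (s₂ := Finset.range n₀))
            simp only [Finset.card_range] at this
            exact_mod_cast this
          calc ((Finset.range n ∩ Finset.range n₀).card : ℝ) * (2 * B)
              ≤ (n₀ : ℝ) * (2 * B) := by
                apply mul_le_mul_of_nonneg_right hcard (by linarith)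
            _ = 2 * B * n₀ := by ring
        simp only [Finset.card_range, nsmul_eq_mul] at h1
        linarith
      refine ⟨2 * B * n₀, ?_⟩
      rw [eventually_atTop]
      refine ⟨1, fun n hn => ?_⟩
      have hn' : (0:ℝ) < (n : ℝ) := by exact_mod_cast hn
      have hmb := (Stmt19.maxRatio_bounds ff g hgpos i n S hSne c (hcprop n)).2
      have hstep : Real.log (maxRatio ff g i n S) ≤ 2 * B * n₀ + n * ε :=
        hmb.trans (hsum n)
      calc (1 / (n : ℝ)) * Real.log (maxRatio ff g i n S)
          ≤ (1 / (n : ℝ)) * (2 * B * n₀ + n * ε) := by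
            apply mul_le_mul_of_nonneg_left hstep (by positivity)
        _ = 2 * B * n₀ / n + ε := by field_simp
  refine ⟨part1, ?_⟩
  -- Part 2
  intro Ich hae
  set u : ℕ → (ℕ → Fin N) → ℝ := fun n i =>
    Real.log (maxRatio ff g i n (Ich i)) with hu
  set v : ℕ → (ℕ → Fin N) → ℝ := fun n => if Integrable (u n) P then u n else 0 with hv
  have hbounds : ∀ᵐ i ∂P, ∀ n, 0 ≤ u n i ∧ u n i ≤ 2 * B * n := by
    filter_upwards [hae] with i hi
    intro n
    obtain ⟨hSne, _, _⟩ := harc (Ich i) hi.1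
    have hmb := Stmt19.maxRatio_bounds ff g hgpos i n (Ich i) hSne
      (fun _ => 2 * B) (fun k hk z hz w hw => h2B i n k hk z w)
    refine ⟨Real.log_nonneg hmb.1, ?_⟩
    have := hmb.2
    rwa [Finset.sum_const, Finset.card_range, nsmul_eq_mul, mul_comm] at this
  have hkey : ∀ n : ℕ, (1 / (n : ℝ)) * ∫ i, u n i ∂P = ∫ i, (1 / (n : ℝ)) * v n i ∂P := by
    intro n
    by_cases hI : Integrable (u n) P
    · rw [integral_const_mul]
      simp only [hv, if_pos hI]
    · have h1 : ∫ i, u n i ∂P = 0 := integral_undef hI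
      simp only [hv, if_neg hI, h1, mul_zero, Pi.zero_apply, integral_zero]
  have hgoal : Tendsto (fun n : ℕ => ∫ i, (1 / (n : ℝ)) * v n i ∂P) atTop (𝓝 0) := by
    have h0 : (0:ℝ) = ∫ _i, (0:ℝ) ∂P := by simp
    rw [h0]
    apply tendsto_integral_of_dominated_convergence (bound := fun _ => 2 * B)
    · intro n
      by_cases hI : Integrable (u n) P
      · simp only [hv, if_pos hI]
        exact (hI.aestronglyMeasurable.const_mul _)
      · simp only [hv, if_neg hI, Pi.zero_apply, mul_zero]
        exact aestronglyMeasurable_const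
    · exact integrable_const _
    · intro n
      filter_upwards [hbounds] with i hi
      obtain ⟨h1, h2⟩ := hi n
      have hvc : (1 / (n : ℝ)) * v n i = (1 / (n : ℝ)) * u n i ∨
          (1 / (n : ℝ)) * v n i = 0 := by
        by_cases hI : Integrable (u n) P
        · left; simp [hv, hI]
        · right; simp [hv, hI]
      have hfin : (1 / (n : ℝ)) * u n i ≤ 2 * B := by
        rcases Nat.eq_zero_or_pos n with hn | hn
        · subst hn; simp; linarith
        · have hn' : (0:ℝ) < (n:ℝ) := by exact_mod_cast hn
          calc (1 / (n : ℝ)) * u n i ≤ (1 / (n : ℝ)) * (2 * B * n) := by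
                apply mul_le_mul_of_nonneg_left h2 (by positivity)
            _ = 2 * B := by field_simp
      rcases hvc with h | h <;> rw [h]
      · rw [Real.norm_eq_abs, abs_of_nonneg (by positivity)]
        exact hfin
      · simp; linarith
    · filter_upwards [hae, hbounds] with i hi hbi
      have hlim := part1 i (Ich i) hi.1 hi.2
      have hlimabs : Tendsto (fun n : ℕ => |(1 / (n : ℝ)) * u n i|) atTop (𝓝 0) := by
        simpa using hlim.abs
      apply squeeze_zero_norm _ hlimabs
      intro n
      have h1 := (hbi n).1
      have hvc : (1 / (n : ℝ)) * v n i = (1 / (n : ℝ)) * u n i ∨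
          (1 / (n : ℝ)) * v n i = 0 := by
        by_cases hI : Integrable (u n) P
        · left; simp [hv, hI]
        · right; simp [hv, hI]
      rcases hvc with h | h <;> rw [h]
      · rw [Real.norm_eq_abs]
      · simp [abs_nonneg]; positivity
  have : (fun n : ℕ => (1 / (n : ℝ)) * ∫ i, u n i ∂P)
      = fun n : ℕ => ∫ i, (1 / (n : ℝ)) * v n i ∂P := funext hkey
  exact this ▸ hgoal
end
end
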